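/- For every integer n ≥ 3, the generalized quaternion group Q_{2ⁿ} of order 2ⁿ (presented as ⟨x, y ∣ x^{2^{n−1}} = y⁴ = 1, yxy⁻¹ = x^{2^{n−1}−1}⟩) has dismantlable subgroup lattice. -/

import Mathlib

/-- A finite lattice `L` with `n` elements is *dismantlable* if there is a chain
`L₁ ⊆ L₂ ⊆ ... ⊆ Lₙ = L` of sublattices of `L` with `|Lᵢ| = i` for `i = 1, ..., n`. -/
def Dismantlable (L : Type*) [Lattice L] [Finite L] : Prop :=
  ∃ c : ℕ → Set L,
    (∀ i, 1 ≤ i → i ≤ Nat.card L → IsSublattice (c i) ∧ Nat.card (c i) = i) ∧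
    (∀ i, 1 ≤ i → i < Nat.card L → c i ⊆ c (i + 1)) ∧
    c (Nat.card L) = Set.univ

/-- `x 0, y 0, x 1, y 1, ..., x (n-1), y (n-1)` form a *crown of order `2n`* (for `n ≥ 3`)
in a poset: the `2n` elements are pairwise distinct, and the only comparability relations
among them are `x i ≤ y i` and `x (i+1) ≤ y i` (indices mod `n`). -/
def IsCrown {P : Type*} [PartialOrder P] {n : ℕ} (x y : Fin n → P) : Prop :=
  3 ≤ n ∧ Function.Injective x ∧ Function.Injective y ∧
  (∀ i j, x i ≠ y j) ∧
  (∀ i j, x i ≤ x j → i = j) ∧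
  (∀ i j, y i ≤ y j → i = j) ∧
  (∀ i j, ¬ y i ≤ x j) ∧
  (∀ i j, x i ≤ y j ↔ (i = j ∨ (i : ℕ) = ((j : ℕ) + 1) % n))


section Generic

variable {L : Type*} [Lattice L] [Finite L]

/-- Chain-building by induction: from any sublattice of cardinality `k+1` we can build the
dismantling chain, provided one can always remove an element keeping a sublattice. -/
lemma chain_of_removable
    (hrem : ∀ S : Set L, IsSublattice S → 2 ≤ S.ncard → ∃ a ∈ S, IsSublattice (S \ {a})) :
    ∀ k : ℕ, ∀ S : Set L, IsSublattice S → S.ncard = k + 1 →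
      ∃ c : ℕ → Set L,
        (∀ i, 1 ≤ i → i ≤ k + 1 → IsSublattice (c i) ∧ Nat.card (c i) = i) ∧
        (∀ i, 1 ≤ i → i < k + 1 → c i ⊆ c (i + 1)) ∧
        c (k + 1) = S := by
  intro k
  induction k with
  | zero =>
    intro S hS hcard
    refine ⟨fun _ => S, ?_, ?_, rfl⟩
    · intro i h1 h2
      have : i = 1 := le_antisymm h2 h1
      subst this
      exact ⟨hS, by rw [Nat.card_coe_set_eq, hcard]⟩
    · intro i h1 h2; omega
  | succ k IH =>
    intro S hS hcard
    obtain ⟨a, haS, hS'⟩ := hrem S hS (by omega)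
    have hcard' : (S \ {a}).ncard = k + 1 := by
      rw [Set.ncard_diff_singleton_of_mem haS, hcard]; omega
    obtain ⟨c', hc1, hc2, hc3⟩ := IH (S \ {a}) hS' hcard'
    refine ⟨Function.update c' (k + 2) S, ?_, ?_, by rw [Function.update_self]⟩
    · intro i h1 h2
      by_cases hi : i = k + 2
      · subst hi
        rw [Function.update_self]
        exact ⟨hS, by rw [Nat.card_coe_set_eq, hcard]⟩
      · rw [Function.update_of_ne hi]
        exact hc1 i h1 (by omega)
    · intro i h1 h2
      by_cases hi : i + 1 = k + 2
      · have hik : i = k + 1 := by omega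
        subst hik
        rw [Function.update_of_ne (by omega : k + 1 ≠ k + 2), Function.update_self, hc3]
        exact Set.diff_subset
      · rw [Function.update_of_ne (by omega : i ≠ k + 2), Function.update_of_ne hi]
        exact hc2 i h1 (by omega)

lemma dismantlable_of_removable [Nonempty L]
    (hrem : ∀ S : Set L, IsSublattice S → 2 ≤ S.ncard → ∃ a ∈ S, IsSublattice (S \ {a})) :
    Dismantlable L := by
  have hpos : 1 ≤ Nat.card L := Nat.card_pos
  have huniv : (Set.univ : Set L).ncard = (Nat.card L - 1) + 1 := by
    rw [Set.ncard_univ]; omega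
  obtain ⟨c, hc1, hc2, hc3⟩ := chain_of_removable hrem (Nat.card L - 1) Set.univ
    ⟨fun _ _ _ _ => trivial, fun _ _ _ _ => trivial⟩ huniv
  have hN : Nat.card L - 1 + 1 = Nat.card L := by omega
  rw [hN] at hc1 hc2 hc3
  exact ⟨c, hc1, hc2, hc3⟩

end Generic

section Quat

open QuaternionGroup Subgroup

variable {G : Type*} [Group G]

/-- In a group, if `g ^ 2 ^ e = 1`, then the natural powers of `g` are pairwise comparable
under the "is a power of" relation. -/
lemma pow_mem_zpowers_or {g : G} {e : ℕ} (hg : g ^ (2 : ℕ) ^ e = 1) (i j : ℕ) :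
    g ^ i ∈ zpowers (g ^ j) ∨ g ^ j ∈ zpowers (g ^ i) := by
  have hdvd : ∀ s t : ℕ, s ∣ t → g ^ t ∈ zpowers (g ^ s) := by
    rintro s t ⟨c, rfl⟩
    have hc : (g ^ s) ^ (c : ℤ) = g ^ (s * c) := by rw [zpow_natCast, ← pow_mul]
    exact ⟨(c : ℤ), hc⟩
  have h1 : g ^ ((((2 : ℕ) ^ e : ℕ)) : ℤ) = 1 := by rw [zpow_natCast, hg]
  have key : ∀ t : ℕ, zpowers (g ^ t) = zpowers (g ^ t.gcd (2 ^ e)) := by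
    intro t
    apply le_antisymm
    · exact zpowers_le.mpr (hdvd _ _ (Nat.gcd_dvd_left _ _))
    · rw [zpowers_le]
      refine ⟨t.gcdA (2 ^ e), ?_⟩
      have hb := Nat.gcd_eq_gcd_ab t (2 ^ e)
      calc (g ^ t) ^ t.gcdA (2 ^ e)
          = g ^ ((t : ℤ) * t.gcdA (2 ^ e)) := by rw [← zpow_natCast g t, ← zpow_mul]
        _ = g ^ ((t : ℤ) * t.gcdA (2 ^ e)) *
              g ^ (((((2 : ℕ) ^ e : ℕ)) : ℤ) * t.gcdB (2 ^ e)) := by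
            have h2 : g ^ (((((2 : ℕ) ^ e : ℕ)) : ℤ) * t.gcdB (2 ^ e)) = 1 := by
              rw [zpow_mul, h1, one_zpow]
            rw [h2, mul_one]
        _ = g ^ ((t : ℤ) * t.gcdA (2 ^ e) + ((((2 : ℕ) ^ e : ℕ)) : ℤ) * t.gcdB (2 ^ e)) :=
            (zpow_add g _ _).symm
        _ = g ^ ((t.gcd (2 ^ e) : ℤ)) := by rw [← hb]
        _ = g ^ t.gcd (2 ^ e) := zpow_natCast g _
  obtain ⟨ki, hki, hkie⟩ := (Nat.dvd_prime_pow Nat.prime_two).mp (Nat.gcd_dvd_right i (2 ^ e))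
  obtain ⟨kj, hkj, hkje⟩ := (Nat.dvd_prime_pow Nat.prime_two).mp (Nat.gcd_dvd_right j (2 ^ e))
  rcases le_total ki kj with h | h
  · right
    rw [key i, hkie]
    have hj : g ^ j ∈ zpowers (g ^ (2 : ℕ) ^ kj) := by
      rw [← hkje, ← key j]; exact mem_zpowers _
    exact (zpowers_le.mpr (hdvd _ _ (pow_dvd_pow 2 h))) hj
  · left
    rw [key j, hkje]
    have hi' : g ^ i ∈ zpowers (g ^ (2 : ℕ) ^ ki) := by
      rw [← hkie, ← key i]; exact mem_zpowers _
    exact (zpowers_le.mpr (hdvd _ _ (pow_dvd_pow 2 h))) hi'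

/-- Subgroups of a cyclic 2-group are pairwise comparable. -/
lemma le_or_le_of_le_zpowers [Finite G] {g : G} {e : ℕ} (hg : g ^ (2 : ℕ) ^ e = 1)
    {H₁ H₂ : Subgroup G} (h1 : H₁ ≤ zpowers g) (h2 : H₂ ≤ zpowers g) :
    H₁ ≤ H₂ ∨ H₂ ≤ H₁ := by
  by_cases hle : H₁ ≤ H₂
  · exact Or.inl hle
  · right
    obtain ⟨x, hx1, hx2⟩ := SetLike.not_le_iff_exists.mp hle
    intro y hy
    obtain ⟨i, hi⟩ := (Submonoid.mem_powers_iff x g).mp (mem_powers_iff_mem_zpowers.mpr (h1 hx1))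
    obtain ⟨j, hj⟩ := (Submonoid.mem_powers_iff y g).mp (mem_powers_iff_mem_zpowers.mpr (h2 hy))
    rcases pow_mem_zpowers_or hg i j with h | h
    · rw [hi, hj] at h
      exact absurd (zpowers_le.mpr hy h) hx2
    · rw [hi, hj] at h
      exact zpowers_le.mpr hx1 h
end Quat


section QuatSpecific

open QuaternionGroup Subgroup

variable {m : ℕ} [NeZero m]

/-- The cyclic "rotation" subgroup of the quaternion group. -/
def Arot (m : ℕ) : Subgroup (QuaternionGroup m) := zpowers (a 1)

lemma a_mem_Arot (i : ZMod (2 * m)) : a i ∈ Arot m := by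
  refine mem_zpowers_iff.mpr ⟨(i.val : ℤ), ?_⟩
  rw [zpow_natCast, a_one_pow, ZMod.natCast_val, ZMod.cast_id]

lemma mem_Arot_form (x : QuaternionGroup m) (hx : x ∈ Arot m) : ∃ i, x = a i := by
  obtain ⟨k, hk⟩ := (Submonoid.mem_powers_iff x (a 1)).mp (mem_powers_iff_mem_zpowers.mpr hx)
  exact ⟨(k : ZMod (2 * m)), by rw [← hk, a_one_pow]⟩

lemma xa_not_mem_Arot (j : ZMod (2 * m)) : xa j ∉ Arot m := by
  intro h
  obtain ⟨i, hi⟩ := mem_Arot_form _ h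
  cases hi

lemma inv_mul_mem_Arot {x y : QuaternionGroup m} (hx : x ∉ Arot m) (hy : y ∉ Arot m) :
    x⁻¹ * y ∈ Arot m := by
  cases x with
  | a i => exact absurd (a_mem_Arot i) hx
  | xa i =>
    cases y with
    | a j => exact absurd (a_mem_Arot j) hy
    | xa j =>
      have : (xa i : QuaternionGroup m)⁻¹ * xa j = a ((j : ZMod (2*m)) - i) := by
        rw [inv_mul_eq_iff_eq_mul, xa_mul_a, add_sub_cancel]
      rw [this]
      exact a_mem_Arot _
end QuatSpecific

section Removable

open QuaternionGroup Subgroup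

variable {m : ℕ} [NeZero m]

lemma comparable_of_le_Arot {e : ℕ} (he : (a 1 : QuaternionGroup m) ^ (2 : ℕ) ^ e = 1)
    {H₁ H₂ : Subgroup (QuaternionGroup m)} (h1 : H₁ ≤ Arot m) (h2 : H₂ ≤ Arot m) :
    H₁ ≤ H₂ ∨ H₂ ≤ H₁ :=
  le_or_le_of_le_zpowers he h1 h2

lemma le_of_meets {x : QuaternionGroup m} (hx : x ∉ Arot m)
    {H₁ H₂ : Subgroup (QuaternionGroup m)} (hx1 : x ∈ H₁) (hx2 : x ∈ H₂)
    (hK : H₁ ⊓ Arot m ≤ H₂ ⊓ Arot m) : H₁ ≤ H₂ := by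
  intro h hh
  by_cases hA : h ∈ Arot m
  · exact (Subgroup.mem_inf.mp (hK (Subgroup.mem_inf.mpr ⟨hh, hA⟩))).1
  · have h1 : x⁻¹ * h ∈ Arot m := inv_mul_mem_Arot hx hA
    have h2 : x⁻¹ * h ∈ H₁ := H₁.mul_mem (H₁.inv_mem hx1) hh
    have h3 : x⁻¹ * h ∈ H₂ := (Subgroup.mem_inf.mp (hK (Subgroup.mem_inf.mpr ⟨h2, h1⟩))).1
    have h4 := H₂.mul_mem hx2 h3
    rwa [mul_inv_cancel_left] at h4

lemma comparable_of_mem {e : ℕ} (he : (a 1 : QuaternionGroup m) ^ (2 : ℕ) ^ e = 1)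
    {x : QuaternionGroup m} (hx : x ∉ Arot m)
    {H₁ H₂ : Subgroup (QuaternionGroup m)} (hx1 : x ∈ H₁) (hx2 : x ∈ H₂) :
    H₁ ≤ H₂ ∨ H₂ ≤ H₁ := by
  rcases comparable_of_le_Arot he (inf_le_right : H₁ ⊓ Arot m ≤ Arot m)
      (inf_le_right : H₂ ⊓ Arot m ≤ Arot m) with h | h
  · exact Or.inl (le_of_meets hx hx1 hx2 h)
  · exact Or.inr (le_of_meets hx hx2 hx1 h)

lemma exists_removable {e : ℕ} (he : (a 1 : QuaternionGroup m) ^ (2 : ℕ) ^ e = 1)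
    (S : Set (Subgroup (QuaternionGroup m))) (hS : IsSublattice S) (hcard : 2 ≤ S.ncard) :
    ∃ H₀ ∈ S, IsSublattice (S \ {H₀}) := by
  have hSne : S.Nonempty := by
    rcases Set.eq_empty_or_nonempty S with h | h
    · rw [h, Set.ncard_empty] at hcard; omega
    · exact h
  by_cases hT : ∃ H ∈ S, ¬ H ≤ Arot m
  · -- there is a subgroup in S not inside the rotation subgroup; take a minimal one
    set T : Set (Subgroup (QuaternionGroup m)) := {H | H ∈ S ∧ ¬ H ≤ Arot m} with hTdef
    have hTne : T.Nonempty := by obtain ⟨H, h1, h2⟩ := hT; exact ⟨H, h1, h2⟩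
    obtain ⟨H₀, hH₀T, hmin'⟩ := (Set.toFinite T).exists_minimal hTne
    have hmin : ∀ b ∈ T, b ≤ H₀ → H₀ = b := fun b hb hle => le_antisymm (hmin' hb hle) hle
    obtain ⟨x, hxH₀, hxA⟩ := SetLike.not_le_iff_exists.mp hH₀T.2
    refine ⟨H₀, hH₀T.1, ⟨?_, ?_⟩⟩
    · -- sup closed
      intro b hb c hc
      refine ⟨hS.supClosed hb.1 hc.1, fun hEq => ?_⟩
      rw [Set.mem_singleton_iff] at hEq
      have hbH : b ≤ H₀ := hEq ▸ le_sup_left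
      have hcH : c ≤ H₀ := hEq ▸ le_sup_right
      have hbA : b ≤ Arot m := by
        by_contra hbA
        exact hb.2 (Set.mem_singleton_iff.mpr (hmin b ⟨hb.1, hbA⟩ hbH).symm)
      have hcA : c ≤ Arot m := by
        by_contra hcA
        exact hc.2 (Set.mem_singleton_iff.mpr (hmin c ⟨hc.1, hcA⟩ hcH).symm)
      rcases comparable_of_le_Arot he hbA hcA with h | h
      · exact hc.2 (Set.mem_singleton_iff.mpr (by rw [← hEq, sup_eq_right.mpr h]))
      · exact hb.2 (Set.mem_singleton_iff.mpr (by rw [← hEq, sup_eq_left.mpr h]))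
    · -- inf closed
      intro b hb c hc
      refine ⟨hS.infClosed hb.1 hc.1, fun hEq => ?_⟩
      rw [Set.mem_singleton_iff] at hEq
      have hxb : x ∈ b := (hEq ▸ (inf_le_left : b ⊓ c ≤ b)) hxH₀
      have hxc : x ∈ c := (hEq ▸ (inf_le_right : b ⊓ c ≤ c)) hxH₀
      rcases comparable_of_mem he hxA hxb hxc with h | h
      · exact hb.2 (Set.mem_singleton_iff.mpr (by rw [← hEq, inf_eq_left.mpr h]))
      · exact hc.2 (Set.mem_singleton_iff.mpr (by rw [← hEq, inf_eq_right.mpr h]))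
  · -- all subgroups in S are inside the rotation subgroup: S is a chain; remove its maximum
    push_neg at hT
    obtain ⟨H₀, hH₀S, hmax'⟩ := (Set.toFinite S).exists_maximal hSne
    have hmax : ∀ b ∈ S, H₀ ≤ b → H₀ = b := fun b hb hle => le_antisymm hle (hmax' hb hle)
    refine ⟨H₀, hH₀S, ⟨?_, ?_⟩⟩
    · intro b hb c hc
      refine ⟨hS.supClosed hb.1 hc.1, fun hEq => ?_⟩
      rw [Set.mem_singleton_iff] at hEq
      rcases comparable_of_le_Arot he (hT b hb.1) (hT c hc.1) with h | h
      · exact hc.2 (Set.mem_singleton_iff.mpr (by rw [← hEq, sup_eq_right.mpr h]))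
      · exact hb.2 (Set.mem_singleton_iff.mpr (by rw [← hEq, sup_eq_left.mpr h]))
    · intro b hb c hc
      refine ⟨hS.infClosed hb.1 hc.1, fun hEq => ?_⟩
      rw [Set.mem_singleton_iff] at hEq
      have hH₀b : H₀ ≤ b := hEq ▸ (inf_le_left : b ⊓ c ≤ b)
      exact hb.2 (Set.mem_singleton_iff.mpr (hmax b hb.1 hH₀b).symm)

end Removable

/-- For every `n ≥ 3`, the generalized quaternion group `Q_{2ⁿ}` of order `2 ^ n`
(realized as the dicyclic group `QuaternionGroup (2 ^ (n - 2))`) has dismantlable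
subgroup lattice. -/
theorem stmt15 (n : ℕ) (hn : 3 ≤ n) :
    Dismantlable (Subgroup (QuaternionGroup (2 ^ (n - 2)))) := by
  haveI : NeZero (2 ^ (n - 2)) := ⟨by positivity⟩
  have he : (QuaternionGroup.a 1 : QuaternionGroup (2 ^ (n - 2))) ^ (2 : ℕ) ^ (n - 1) = 1 := by
    have h2 : (2 : ℕ) ^ (n - 1) = 2 * 2 ^ (n - 2) := by
      rw [show n - 1 = (n - 2) + 1 from by omega, pow_succ']
    rw [h2]
    exact QuaternionGroup.a_one_pow_n
  exact dismantlable_of_removable (fun S hS h2 => exists_removable he S hS h2)
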